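/- Let λ = λ* = (√2+1)·e^{√2}. Then for every x ∈ (−∞, −1) ∪ (0, ∞), the iterates satisfy ζ_{λ*}^n(x) → √2 as n → ∞. -/

import Mathlib

open Filter

/-- The real function `ζ_λ(x) = λ·x·e^{−x}/(x+1)`. -/
noncomputable def zeta (lam x : ℝ) : ℝ := lam * x * Real.exp (-x) / (x + 1)

set_option maxHeartbeats 1000000

open Real in
noncomputable def ff : ℝ → ℝ := zeta ((Real.sqrt 2 + 1) * Real.exp (Real.sqrt 2))

section Aux
open Real

lemma hp2 : Real.sqrt 2 ^ 2 = 2 := Real.sq_sqrt (by norm_num)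
lemma hppos : 0 < Real.sqrt 2 := Real.sqrt_pos.mpr (by norm_num)
lemma hpl : (1.414213 : ℝ) < Real.sqrt 2 := by nlinarith [hp2, hppos]
lemma hpu : Real.sqrt 2 < 1.414214 := by nlinarith [hp2, hppos]

lemma keyexp' {s : ℝ} (hs : 0 < s) : Real.exp s * (1 - s + s^2/2 - s^3/6) < 1 := by
  set φ : ℝ → ℝ := fun u => Real.exp u * (1 - u + u^2/2 - u^3/6) with hφ
  have hd : ∀ u : ℝ, HasDerivAt φ (Real.exp u * (-u^3/6)) u := by
    intro u
    have h1 := Real.hasDerivAt_exp u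
    have a2 : HasDerivAt (fun s : ℝ => s^2) (2*u) u := by simpa using hasDerivAt_pow 2 u
    have a3 : HasDerivAt (fun s : ℝ => s^3) (3*u^2) u := by simpa using hasDerivAt_pow 3 u
    have h2 : HasDerivAt (fun s : ℝ => 1 - s + s^2/2 - s^3/6) (0 - 1 + (2*u)/2 - (3*u^2)/6) u := by
      exact (((hasDerivAt_const u (1:ℝ)).sub (hasDerivAt_id u)).add (a2.div_const 2)).sub
        (a3.div_const 6)
    have : HasDerivAt φ _ u := h1.mul h2
    convert this using 1
    ring
  have hanti : StrictAntiOn φ (Set.Ici (0:ℝ)) := by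
    apply strictAntiOn_of_deriv_neg (convex_Ici 0)
    · exact Continuous.continuousOn (by continuity)
    · intro u hu
      rw [(hd u).deriv]
      have : 0 < Real.exp u := Real.exp_pos u
      rw [interior_Ici] at hu
      have hu' : (0:ℝ) < u := hu
      nlinarith [mul_pos this (mul_pos (mul_pos hu' hu') hu')]
  have h0 : φ 0 = 1 := by simp [hφ]
  have := hanti (Set.self_mem_Ici) (Set.mem_Ici.mpr hs.le) hs
  simpa [h0] using this

lemma keyexp {s : ℝ} (hs : 0 ≤ s) : Real.exp s * (1 - s + s^2/2 - s^3/6) ≤ 1 := by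
  rcases eq_or_lt_of_le hs with h | h
  · simp [← h]
  · exact (keyexp' h).le

lemma cubic_le_exp {s : ℝ} (hs : 0 ≤ s) : 1 + s + s^2/2 + s^3/6 ≤ Real.exp s := by
  have := Real.sum_le_exp_of_nonneg hs 4
  simp [Finset.sum_range_succ, Nat.factorial] at this
  linarith

lemma ff_eq (x : ℝ) : ff x = (Real.sqrt 2 + 1) * x * Real.exp (Real.sqrt 2 - x) / (x + 1) := by
  unfold ff zeta
  rw [Real.exp_sub]
  rw [Real.exp_neg]
  field_simp

lemma ff_pos {x : ℝ} (hx : 0 < x) : 0 < ff x := by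
  rw [ff_eq]
  apply div_pos
  · positivity
  · linarith

lemma ff_pos' {x : ℝ} (hx : x < -1) : 0 < ff x := by
  rw [ff_eq]
  apply div_pos_of_neg_of_neg
  · have h1 : 0 < Real.sqrt 2 + 1 := by positivity
    have h2 : 0 < Real.exp (Real.sqrt 2 - x) := Real.exp_pos _
    exact mul_neg_of_neg_of_pos (mul_neg_of_pos_of_neg h1 (by linarith)) h2
  · linarith

lemma ff_fix : ff (Real.sqrt 2) = Real.sqrt 2 := by
  rw [ff_eq]
  rw [sub_self, Real.exp_zero]
  have : Real.sqrt 2 + 1 ≠ 0 := by positivity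
  field_simp

lemma ff_dec {a b : ℝ} (ha : 0.7 ≤ a) (hab : a < b) : ff b < ff a := by
  rw [ff_eq, ff_eq]
  rw [div_lt_div_iff₀ (by linarith) (by linarith)]
  have he : Real.exp (Real.sqrt 2 - a) = Real.exp (Real.sqrt 2 - b) * Real.exp (b - a) := by
    rw [← Real.exp_add]; ring_nf
  rw [he]
  have h1 : 1 + (b - a) < Real.exp (b - a) := by
    have := Real.add_one_lt_exp (x := b - a) (by intro h; nlinarith)
    linarith
  have h2 : 0 < Real.exp (Real.sqrt 2 - b) := Real.exp_pos _
  have h3 : 0 < Real.sqrt 2 + 1 := by positivity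
  have hstep : (Real.sqrt 2+1)*b*(a+1) < (Real.sqrt 2+1)*a*(1+(b-a))*(b+1) := by
    nlinarith [mul_pos (mul_pos h3 (sub_pos.mpr hab)) (show (0:ℝ) < a*(b+1)-1 by nlinarith)]
  have hstep2 : (Real.sqrt 2+1)*a*(1+(b-a))*(b+1) < (Real.sqrt 2+1)*a*Real.exp (b-a)*(b+1) := by
    have hpos : 0 < (Real.sqrt 2 + 1)*a*(b+1) := by nlinarith
    nlinarith
  calc (Real.sqrt 2+1)*b*Real.exp (Real.sqrt 2-b)*(a+1)
      = ((Real.sqrt 2+1)*b*(a+1))*Real.exp (Real.sqrt 2-b) := by ring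
    _ < ((Real.sqrt 2+1)*a*Real.exp (b-a)*(b+1))*Real.exp (Real.sqrt 2-b) :=
        mul_lt_mul_of_pos_right (hstep.trans hstep2) h2
    _ = (Real.sqrt 2+1)*a*(Real.exp (Real.sqrt 2-b)*Real.exp (b-a))*(b+1) := by ring

lemma lam_u : (Real.sqrt 2 + 1) * Real.exp (Real.sqrt 2) ≤ 9.949 := by
  have hs0 : (0:ℝ) ≤ Real.sqrt 2 - 1 := by linarith [hpl]
  have hkey := keyexp hs0
  have he1 : Real.exp 1 < 2.7182818286 := Real.exp_one_lt_d9
  have hsplit : Real.exp (Real.sqrt 2) = Real.exp 1 * Real.exp (Real.sqrt 2 - 1) := by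
    rw [← Real.exp_add]; ring_nf
  have hE : (0:ℝ) < 1 - (Real.sqrt 2-1) + (Real.sqrt 2-1)^2/2 - (Real.sqrt 2-1)^3/6 := by
    nlinarith [hp2, hpl, hpu]
  have hexppos : (0:ℝ) < Real.exp (Real.sqrt 2 - 1) := Real.exp_pos _
  have h2 : Real.exp (Real.sqrt 2) * (1 - (Real.sqrt 2-1) + (Real.sqrt 2-1)^2/2 - (Real.sqrt 2-1)^3/6)
      < 2.7182818286 := by
    rw [hsplit]
    calc Real.exp 1 * Real.exp (Real.sqrt 2 - 1) * (1 - (Real.sqrt 2-1) + (Real.sqrt 2-1)^2/2 - (Real.sqrt 2-1)^3/6)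
        = Real.exp 1 * (Real.exp (Real.sqrt 2 - 1) * (1 - (Real.sqrt 2-1) + (Real.sqrt 2-1)^2/2 - (Real.sqrt 2-1)^3/6)) := by ring
      _ ≤ Real.exp 1 * 1 := by
          apply mul_le_mul_of_nonneg_left hkey (Real.exp_pos 1).le
      _ < 2.7182818286 := by rw [mul_one]; exact he1
  have h3 : (Real.sqrt 2 + 1) * Real.exp (Real.sqrt 2)
      * (1 - (Real.sqrt 2-1) + (Real.sqrt 2-1)^2/2 - (Real.sqrt 2-1)^3/6)
      < 9.949 * (1 - (Real.sqrt 2-1) + (Real.sqrt 2-1)^2/2 - (Real.sqrt 2-1)^3/6) := by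
    have hc : (0:ℝ) < Real.sqrt 2 + 1 := by positivity
    have h4 : 2.7182818286 * (Real.sqrt 2 + 1)
        ≤ 9.949 * (1 - (Real.sqrt 2-1) + (Real.sqrt 2-1)^2/2 - (Real.sqrt 2-1)^3/6) := by
      nlinarith [hp2, hpl, hpu]
    calc (Real.sqrt 2 + 1) * Real.exp (Real.sqrt 2)
        * (1 - (Real.sqrt 2-1) + (Real.sqrt 2-1)^2/2 - (Real.sqrt 2-1)^3/6)
        = (Real.sqrt 2 + 1) * (Real.exp (Real.sqrt 2)
          * (1 - (Real.sqrt 2-1) + (Real.sqrt 2-1)^2/2 - (Real.sqrt 2-1)^3/6)) := by ring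
      _ < (Real.sqrt 2 + 1) * 2.7182818286 := by
          exact mul_lt_mul_of_pos_left h2 hc
      _ = 2.7182818286 * (Real.sqrt 2 + 1) := by ring
      _ ≤ _ := h4
  exact (lt_of_mul_lt_mul_right h3 hE.le).le

lemma ff_le21 {x : ℝ} (hx : 0 < x) (hx7 : x ≤ 0.7) : ff x ≤ 2.1 := by
  rw [ff_eq, div_le_iff₀ (by linarith : (0:ℝ) < x + 1)]
  have hS := cubic_le_exp hx.le
  have h4 : Real.exp (Real.sqrt 2 - x) * Real.exp x = Real.exp (Real.sqrt 2) := by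
    rw [← Real.exp_add]; ring_nf
  have hpoly : 9.949 * x ≤ 2.1 * (x+1) * (1 + x + x^2/2 + x^3/6) := by nlinarith [sq_nonneg x, sq_nonneg (x - 0.63)]
  have hmain : (Real.sqrt 2 + 1) * x * Real.exp (Real.sqrt 2 - x) * Real.exp x
      ≤ (2.1 * (x+1)) * Real.exp x := by
    calc (Real.sqrt 2 + 1) * x * Real.exp (Real.sqrt 2 - x) * Real.exp x
        = ((Real.sqrt 2 + 1) * Real.exp (Real.sqrt 2)) * x := by rw [mul_assoc _ _ (Real.exp x), h4]; ring
      _ ≤ 9.949 * x := mul_le_mul_of_nonneg_right lam_u hx.le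
      _ ≤ 2.1 * (x+1) * (1 + x + x^2/2 + x^3/6) := hpoly
      _ ≤ (2.1 * (x+1)) * Real.exp x := by
          apply mul_le_mul_of_nonneg_left hS (by linarith)
  exact le_of_mul_le_mul_right hmain (Real.exp_pos x)

lemma ff_double {x : ℝ} (hx : 0 < x) (hx7 : x ≤ 0.7) : 2*x ≤ ff x := by
  rw [ff_eq, le_div_iff₀ (by linarith : (0:ℝ) < x + 1)]
  have h1 : (Real.sqrt 2 - x) + 1 ≤ Real.exp (Real.sqrt 2 - x) := Real.add_one_le_exp _
  have hc : (0:ℝ) ≤ (Real.sqrt 2 + 1) * x := by positivity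
  have h2 : (Real.sqrt 2 + 1) * x * ((Real.sqrt 2 - x) + 1) ≤ (Real.sqrt 2 + 1) * x * Real.exp (Real.sqrt 2 - x) :=
    mul_le_mul_of_nonneg_left h1 hc
  nlinarith [hp2, hpl, hpu, mul_pos hx hx]

lemma ff_21 : (0.7:ℝ) ≤ ff 2.1 := by
  rw [ff_eq, le_div_iff₀ (by norm_num : (0:ℝ) < 2.1 + 1)]
  have hs : (0:ℝ) < 2.1 - Real.sqrt 2 := by linarith [hpu]
  have hkey := keyexp hs.le
  have hrec : Real.exp (Real.sqrt 2 - 2.1) * Real.exp (2.1 - Real.sqrt 2) = 1 := by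
    rw [← Real.exp_add]; norm_num
  have hE : (1 - (2.1 - Real.sqrt 2) + (2.1 - Real.sqrt 2)^2/2 - (2.1 - Real.sqrt 2)^3/6)
      ≤ Real.exp (Real.sqrt 2 - 2.1) := by
    have h0 : (0:ℝ) < Real.exp (Real.sqrt 2 - 2.1) := Real.exp_pos _
    nlinarith [hkey, hrec, h0]
  nlinarith [hE, hp2, hpl, hpu, Real.exp_pos (Real.sqrt 2 - 2.1)]

lemma ident1 (p x : ℝ) (h2 : p^2 = 2) :
    ((p*(1+(3*p-4)/2*(x-p)) - (x-p))*(x+1)) * (1-(p-x)+(p-x)^2/2-(p-x)^3/6)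
      - (p+1)*x*(1+(3*p-4)/2*(x-p))
    = (p-x)^3*((-11/3+8/3*p) + (-2+3/2*p)*x + ((p-1)/3)*x^2) := by
  linear_combination ((-1)*p + (-13/12)*p^3 + (1/4)*p^4 + x + (19/4)*x*p^2 + (-25/12)*x*p^3
    + (1/4)*x*p^4 + (-25/4)*x^2*p + (19/4)*x^2*p^2 + (-1)*x^2*p^3 + (31/12)*x^3
    + (-17/4)*x^3*p + (3/2)*x^3*p^2 + (4/3)*x^4 + (-1)*x^4*p + (1/4)*x^5) * h2

lemma ident2 (p x : ℝ) (h2 : p^2 = 2) :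
    (p+1)*x*(1-(x-p)+(x-p)^2/2-(x-p)^3/6)*(1+(3*p-4)/2*(x-p))
      - (p*(1+(3*p-4)/2*(x-p)) - (x-p))*(x+1)
    = (x-p)^3*((p-1/2) + (1/6-p/4)*x + (p/12-1/6)*x^2) := by
  linear_combination (p + p^2 + (-1)*x + (-2)*x*p + (-3/2)*x*p^2 + (-2/3)*x*p^3 + (-1/4)*x*p^4
    + x^2 + 3*x^2*p + 2*x^2*p^2 + x^2*p^3 + (-3/2)*x^3 + (-2)*x^3*p + (-3/2)*x^3*p^2
    + (2/3)*x^4 + x^4*p + (-1/4)*x^5) * h2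

lemma crux1 {x : ℝ} (h1 : (0.7:ℝ) ≤ x) (h2 : x ≤ Real.sqrt 2) :
    (ff x - Real.sqrt 2) + (x - Real.sqrt 2)
      + (3*Real.sqrt 2-4)/2 * ((ff x - Real.sqrt 2) * (x - Real.sqrt 2)) ≤ 0 := by
  have hp2 := hp2; have hpl := hpl; have hpu := hpu
  set p := Real.sqrt 2 with hp
  have hx0 : 0 < x := by linarith
  have hx1 : 0 < x + 1 := by linarith
  have hs0 : 0 ≤ p - x := by linarith
  have hkey := keyexp hs0
  have hW : 0 < 1 + (3*p-4)/2*(x-p) := by nlinarith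
  have hsu : p - x ≤ 0.714214 := by linarith
  have hE : 0 < 1 - (p-x) + (p-x)^2/2 - (p-x)^3/6 := by
    nlinarith [sq_nonneg (p-x), mul_le_mul_of_nonneg_left hsu (mul_nonneg hs0 hs0)]
  have hfx : ff x * (x+1) = (p+1)*x*Real.exp (p-x) := by
    rw [ff_eq]; field_simp; rw [hp]
  have hH1 : 0 ≤ (-11/3+8/3*p) + (-2+3/2*p)*x + ((p-1)/3)*x^2 := by nlinarith
  have hident := ident1 p x hp2
  have hcoef : 0 ≤ (p+1)*x*(1+(3*p-4)/2*(x-p)) := by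
    apply mul_nonneg (mul_nonneg (by positivity) hx0.le) hW.le
  have step1 : ((p+1)*x*Real.exp (p-x)*(1+(3*p-4)/2*(x-p))) * (1-(p-x)+(p-x)^2/2-(p-x)^3/6)
       ≤ (p+1)*x*(1+(3*p-4)/2*(x-p)) := by
    calc ((p+1)*x*Real.exp (p-x)*(1+(3*p-4)/2*(x-p))) * (1-(p-x)+(p-x)^2/2-(p-x)^3/6)
        = ((p+1)*x*(1+(3*p-4)/2*(x-p)))
          * (Real.exp (p-x) * (1-(p-x)+(p-x)^2/2-(p-x)^3/6)) := by ring
      _ ≤ ((p+1)*x*(1+(3*p-4)/2*(x-p))) * 1 := mul_le_mul_of_nonneg_left hkey hcoef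
      _ = _ := by ring
  have step2 : (p+1)*x*(1+(3*p-4)/2*(x-p))
      ≤ (((p*(1+(3*p-4)/2*(x-p)) - (x-p))*(x+1))) * (1-(p-x)+(p-x)^2/2-(p-x)^3/6) := by
    linarith [hident, mul_nonneg (pow_nonneg hs0 3) hH1]
  have main : (p+1)*x*Real.exp (p-x)*(1+(3*p-4)/2*(x-p))
      ≤ (p*(1+(3*p-4)/2*(x-p)) - (x-p))*(x+1) :=
    le_of_mul_le_mul_right (step1.trans step2) hE
  have hG2 : ((ff x - p) + (x - p) + (3*p-4)/2 * ((ff x - p) * (x - p))) * (x+1) <= 0 := by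
    have e1 : ((ff x - p) + (x - p) + (3*p-4)/2 * ((ff x - p) * (x - p))) * (x+1)
        = (ff x * (x+1)) * (1+(3*p-4)/2*(x-p))
          - (p*(1+(3*p-4)/2*(x-p)) - (x-p))*(x+1) := by ring
    rw [e1, hfx]
    linarith [main]
  by_contra hcon
  push_neg at hcon
  exact absurd hG2 (not_le.mpr (mul_pos hcon hx1))

lemma crux2 {x : ℝ} (h1 : Real.sqrt 2 < x) (h2 : x ≤ 2.1) :
    0 < (ff x - Real.sqrt 2) + (x - Real.sqrt 2)
      + (3*Real.sqrt 2-4)/2 * ((ff x - Real.sqrt 2) * (x - Real.sqrt 2)) := by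
  have hp2 := hp2; have hpl := hpl; have hpu := hpu
  set p := Real.sqrt 2 with hp
  have hx0 : 0 < x := by linarith
  have hx1 : 0 < x + 1 := by linarith
  have hs0 : 0 < x - p := by linarith
  have hkey := keyexp' hs0
  have hrec : Real.exp (p - x) * Real.exp (x - p) = 1 := by
    rw [← Real.exp_add]; norm_num
  have hEexp : 1 - (x-p) + (x-p)^2/2 - (x-p)^3/6 < Real.exp (p - x) := by
    calc 1 - (x-p) + (x-p)^2/2 - (x-p)^3/6
        = (Real.exp (p-x) * Real.exp (x-p)) * (1 - (x-p) + (x-p)^2/2 - (x-p)^3/6) := by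
          rw [hrec]; ring
      _ = Real.exp (p-x) * (Real.exp (x-p) * (1 - (x-p) + (x-p)^2/2 - (x-p)^3/6)) := by ring
      _ < Real.exp (p-x) * 1 := mul_lt_mul_of_pos_left hkey (Real.exp_pos _)
      _ = Real.exp (p-x) := mul_one _
  have hW : 0 < 1 + (3*p-4)/2*(x-p) := by nlinarith
  have hfx : ff x * (x+1) = (p+1)*x*Real.exp (p-x) := by
    rw [ff_eq]; field_simp; rw [hp]
  have hH2 : 0 ≤ (p-1/2) + (1/6-p/4)*x + (p/12-1/6)*x^2 := by nlinarith
  have hident := ident2 p x hp2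
  have hcoef : 0 < (p+1)*x*(1+(3*p-4)/2*(x-p)) := by
    apply mul_pos (mul_pos (by positivity) hx0) hW
  have step1 : (p*(1+(3*p-4)/2*(x-p)) - (x-p))*(x+1)
      ≤ (p+1)*x*(1-(x-p)+(x-p)^2/2-(x-p)^3/6)*(1+(3*p-4)/2*(x-p)) := by
    linarith [hident, mul_nonneg (pow_nonneg hs0.le 3) hH2]
  have step2 : (p+1)*x*(1-(x-p)+(x-p)^2/2-(x-p)^3/6)*(1+(3*p-4)/2*(x-p))
      < (p+1)*x*Real.exp (p-x)*(1+(3*p-4)/2*(x-p)) := by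
    calc (p+1)*x*(1-(x-p)+(x-p)^2/2-(x-p)^3/6)*(1+(3*p-4)/2*(x-p))
        = ((p+1)*x*(1+(3*p-4)/2*(x-p))) * (1-(x-p)+(x-p)^2/2-(x-p)^3/6) := by ring
      _ < ((p+1)*x*(1+(3*p-4)/2*(x-p))) * Real.exp (p-x) := by
          exact mul_lt_mul_of_pos_left hEexp hcoef
      _ = _ := by ring
  have main : (p*(1+(3*p-4)/2*(x-p)) - (x-p))*(x+1)
      < (p+1)*x*Real.exp (p-x)*(1+(3*p-4)/2*(x-p)) := step1.trans_lt step2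
  have hG2 : 0 < ((ff x - p) + (x - p) + (3*p-4)/2 * ((ff x - p) * (x - p))) * (x+1) := by
    have e1 : ((ff x - p) + (x - p) + (3*p-4)/2 * ((ff x - p) * (x - p))) * (x+1)
        = (ff x * (x+1)) * (1+(3*p-4)/2*(x-p))
          - (p*(1+(3*p-4)/2*(x-p)) - (x-p))*(x+1) := by ring
    rw [e1, hfx]
    linarith [main]
  by_contra hcon
  push_neg at hcon
  exact absurd hG2 (not_lt.mpr (mul_nonpos_iff.mpr (Or.inr ⟨hcon, hx1.le⟩)))

lemma ff_cont {y : ℝ} (hy : y ≠ -1) : ContinuousAt ff y := by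
  unfold ff zeta
  apply ContinuousAt.div
  · fun_prop
  · fun_prop
  · intro h; apply hy; linarith

lemma ff_dec_le {a b : ℝ} (ha : 0.7 ≤ a) (hab : a ≤ b) : ff b ≤ ff a := by
  rcases eq_or_lt_of_le hab with h | h
  · rw [h]
  · exact (ff_dec ha h).le

lemma ff_le21' {x : ℝ} (hx : 0 < x) (hx21 : x ≤ 2.1) : ff x ≤ 2.1 := by
  rcases le_or_gt x 0.7 with h | h
  · exact ff_le21 hx h
  · calc ff x ≤ ff 0.7 := ff_dec_le le_rfl h.le
      _ ≤ 2.1 := ff_le21 (by norm_num) le_rfl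

/-- invariance from [0.7, √2] -/
lemma inv1 {x : ℝ} (h1 : 0.7 ≤ x) (h2 : x ≤ Real.sqrt 2) :
    Real.sqrt 2 ≤ ff x ∧ ff x ≤ 2.1 := by
  constructor
  · rcases eq_or_lt_of_le h2 with h | h
    · rw [h, ff_fix]
    · rw [← ff_fix]; exact (ff_dec h1 h).le
  · exact ff_le21' (by linarith) (by linarith [hpu])

lemma inv2 {x : ℝ} (h1 : Real.sqrt 2 < x) (h2 : x ≤ 2.1) :
    0.7 ≤ ff x ∧ ff x < Real.sqrt 2 := by
  constructor
  · calc (0.7:ℝ) ≤ ff 2.1 := ff_21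
      _ ≤ ff x := ff_dec_le (by linarith [hpl]) h2
  · rw [← ff_fix]; exact ff_dec (by linarith [hpl]) h1

/-- key dynamic step: for x ∈ [0.7, √2), x < ff (ff x) < √2 -/
lemma step_lemma {x : ℝ} (h1 : 0.7 ≤ x) (h2 : x < Real.sqrt 2) :
    x < ff (ff x) ∧ ff (ff x) < Real.sqrt 2 := by
  have hy1 : Real.sqrt 2 < ff x := by
    rw [← ff_fix]; exact ff_dec h1 h2
  have hy2 : ff x ≤ 2.1 := (inv1 h1 h2.le).2
  have hz : 0.7 ≤ ff (ff x) ∧ ff (ff x) < Real.sqrt 2 := inv2 hy1 hy2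
  refine ⟨?_, hz.2⟩
  have hA := crux1 h1 h2.le
  have hB := crux2 hy1 hy2
  -- rewrite both as R(·, ff x) and compare
  set p := Real.sqrt 2
  set y := ff x
  set z := ff y
  have hw : 0 < 1 + (3*p-4)/2 * (y - p) := by
    have := hpl; have := hpu; nlinarith
  -- hA : (y-p)+(x-p)+t((y-p)(x-p)) ≤ 0 ; as (x-p)*w + (y-p) ≤ 0
  -- hB : 0 < (z-p)+(y-p)+t((z-p)(y-p)) ; as 0 < (z-p)*w + (y-p)
  have hcomp : (x - p) * (1 + (3*p-4)/2 * (y - p)) < (z - p) * (1 + (3*p-4)/2 * (y - p)) := by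
    nlinarith [hA, hB]
  have hxz := lt_of_mul_lt_mul_right hcomp hw.le
  linarith

lemma tendsto_of_even_odd {h : ℕ → ℝ} {a : ℝ}
    (he : Tendsto (fun n => h (2*n)) atTop (nhds a))
    (ho : Tendsto (fun n => h (2*n+1)) atTop (nhds a)) :
    Tendsto h atTop (nhds a) := by
  rw [Metric.tendsto_atTop] at *
  intro ε hε
  obtain ⟨N1, hN1⟩ := he ε hε
  obtain ⟨N2, hN2⟩ := ho ε hε
  refine ⟨2*N1+2*N2+1, fun n hn => ?_⟩
  rcases Nat.even_or_odd n with ⟨k, hk⟩ | ⟨k, hk⟩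
  · have hn' : n = 2*k := by omega
    rw [hn']
    exact hN1 k (by omega)
  · have hn' : n = 2*k+1 := by omega
    rw [hn']
    exact hN2 k (by omega)

lemma conv_core {x : ℝ} (h1 : 0.7 ≤ x) (h2 : x ≤ Real.sqrt 2) :
    Tendsto (fun n => ff^[n] x) atTop (nhds (Real.sqrt 2)) := by
  rcases eq_or_lt_of_le h2 with heq | hlt
  · subst heq
    simp only [Function.iterate_fixed ff_fix]
    exact tendsto_const_nhds
  set u : ℕ → ℝ := fun n => (ff ∘ ff)^[n] x with hu_def
  have husucc : ∀ n, u (n+1) = ff (ff (u n)) := by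
    intro n
    show (ff ∘ ff)^[n+1] x = _
    rw [Function.iterate_succ_apply']
    rfl
  have hu : ∀ n, 0.7 ≤ u n ∧ u n < Real.sqrt 2 := by
    intro n
    induction n with
    | zero => exact ⟨h1, hlt⟩
    | succ n ih =>
      have hs := step_lemma ih.1 ih.2
      rw [husucc]
      exact ⟨le_trans ih.1 (le_of_lt hs.1), hs.2⟩
  have hmono : Monotone u := by
    apply monotone_nat_of_le_succ
    intro n
    rw [husucc]
    exact (step_lemma (hu n).1 (hu n).2).1.le
  have hbdd : BddAbove (Set.range u) := by
    refine ⟨Real.sqrt 2, ?_⟩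
    rintro y ⟨n, rfl⟩
    exact (hu n).2.le
  have htend : Tendsto u atTop (nhds (⨆ n, u n)) := tendsto_atTop_ciSup hmono hbdd
  set L := ⨆ n, u n with hL_def
  have hL7 : 0.7 ≤ L := le_trans (hu 0).1 (le_ciSup hbdd 0)
  have hLp : L ≤ Real.sqrt 2 := ciSup_le (fun n => (hu n).2.le)
  have hcontL : ContinuousAt (ff ∘ ff) L := by
    have hL0 : (0:ℝ) < L := by linarith
    exact ContinuousAt.comp (ff_cont (by intro hc; linarith [ff_pos hL0])) (ff_cont (by intro hc; linarith))
  have h1' : Tendsto (fun n => u (n+1)) atTop (nhds L) := (tendsto_add_atTop_iff_nat 1).mpr htend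
  have h2' : Tendsto (fun n => (ff ∘ ff) (u n)) atTop (nhds ((ff ∘ ff) L)) :=
    hcontL.tendsto.comp htend
  have heqfun : (fun n => u (n+1)) = fun n => (ff ∘ ff) (u n) := by
    funext n
    rw [husucc]
    rfl
  have hfixL : (ff ∘ ff) L = L := by
    apply tendsto_nhds_unique h2'
    rw [← heqfun]
    exact h1'
  have hLeq : L = Real.sqrt 2 := by
    by_contra hne
    have hLlt : L < Real.sqrt 2 := lt_of_le_of_ne hLp hne
    have := (step_lemma hL7 hLlt).1
    rw [show ff (ff L) = (ff ∘ ff) L from rfl, hfixL] at this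
    exact lt_irrefl L this
  rw [hLeq] at htend
  have heven : ∀ n, ff^[2*n] x = u n := by
    intro n
    rw [Function.iterate_mul]
    rfl
  have hodd : ∀ n, ff^[2*n+1] x = ff (u n) := by
    intro n
    rw [Function.iterate_succ_apply', heven]
  apply tendsto_of_even_odd
  · simp only [heven]; exact htend
  · simp only [hodd]
    have : Tendsto (fun n => ff (u n)) atTop (nhds (ff (Real.sqrt 2))) :=
      (ff_cont (by intro h; linarith [hppos] : Real.sqrt 2 ≠ -1)).tendsto.comp htend
    rwa [ff_fix] at this

lemma conv_box {x : ℝ} (h1 : 0.7 ≤ x) (h2 : x ≤ 2.1) :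
    Tendsto (fun n => ff^[n] x) atTop (nhds (Real.sqrt 2)) := by
  rcases le_or_gt x (Real.sqrt 2) with h | h
  · exact conv_core h1 h
  · have hy := inv2 h h2
    have hcv := conv_core hy.1 hy.2.le
    rw [← tendsto_add_atTop_iff_nat 1]
    have : (fun n => ff^[n+1] x) = fun n => ff^[n] (ff x) := by
      funext n
      exact Function.iterate_succ_apply ff n x
    rw [this]
    exact hcv

lemma escape {x : ℝ} (hx : 0 < x) (h7 : x ≤ 0.7) :
    ∃ n, 0.7 < ff^[n] x ∧ ff^[n] x ≤ 2.1 := by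
  have hex : ∃ n, 0.7 < ff^[n] x := by
    by_contra hall
    push_neg at hall
    have hgrow : ∀ n, 0 < ff^[n] x ∧ 2^n * x ≤ ff^[n] x := by
      intro n
      induction n with
      | zero => exact ⟨hx, by norm_num⟩
      | succ n ih =>
        have h1 := hall n
        rw [Function.iterate_succ_apply']
        refine ⟨ff_pos ih.1, ?_⟩
        have hd := ff_double ih.1 h1
        calc (2:ℝ)^(n+1) * x = 2 * (2^n * x) := by ring
          _ ≤ 2 * ff^[n] x := by linarith [ih.2]
          _ ≤ ff (ff^[n] x) := hd
    obtain ⟨n, hn⟩ := pow_unbounded_of_one_lt (0.7/x) (by norm_num : (1:ℝ) < 2)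
    have hg := (hgrow n).2
    have ha := hall n
    rw [div_lt_iff₀ hx] at hn
    linarith
  classical
  have hn0 : 0.7 < ff^[Nat.find hex] x := Nat.find_spec hex
  have hmin : ∀ k < Nat.find hex, ff^[k] x ≤ 0.7 := fun k hk => le_of_not_gt (Nat.find_min hex hk)
  have hpos : ∀ k, k ≤ Nat.find hex → 0 < ff^[k] x := by
    intro k
    induction k with
    | zero => intro _; exact hx
    | succ k ih =>
      intro hk
      rw [Function.iterate_succ_apply']
      exact ff_pos (ih (by omega))
  rcases Nat.eq_zero_or_pos (Nat.find hex) with h0 | hposn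
  · rw [h0] at hn0
    simp at hn0
    linarith
  · obtain ⟨m, hm⟩ : ∃ m, Nat.find hex = m + 1 := ⟨Nat.find hex - 1, by omega⟩
    refine ⟨Nat.find hex, hn0, ?_⟩
    rw [hm, Function.iterate_succ_apply']
    exact ff_le21 (hpos m (by omega)) (hmin m (by omega))

lemma conv_le21 {x : ℝ} (hx : 0 < x) (h2 : x ≤ 2.1) :
    Tendsto (fun n => ff^[n] x) atTop (nhds (Real.sqrt 2)) := by
  rcases lt_or_ge 0.7 x with h | h
  · exact conv_box h.le h2
  · obtain ⟨n, hn1, hn2⟩ := escape hx h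
    have hcv := conv_box hn1.le hn2
    rw [← tendsto_add_atTop_iff_nat n]
    have : (fun k => ff^[k+n] x) = fun k => ff^[k] (ff^[n] x) := by
      funext k
      exact Function.iterate_add_apply ff k n x
    rw [this]
    exact hcv

lemma conv_pos {x : ℝ} (hx : 0 < x) :
    Tendsto (fun n => ff^[n] x) atTop (nhds (Real.sqrt 2)) := by
  rcases le_or_gt x 2.1 with h | h
  · exact conv_le21 hx h
  · have hy1 : 0 < ff x := ff_pos hx
    have hy2 : ff x ≤ 2.1 := by
      calc ff x ≤ ff 2.1 := (ff_dec (by norm_num) h).le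
        _ ≤ 2.1 := ff_le21' (by norm_num) le_rfl
    have hcv := conv_le21 hy1 hy2
    rw [← tendsto_add_atTop_iff_nat 1]
    have : (fun n => ff^[n+1] x) = fun n => ff^[n] (ff x) := by
      funext n
      exact Function.iterate_succ_apply ff n x
    rw [this]
    exact hcv

end Aux

open Real in
theorem iterates_tendsto_sqrt_two_at_lamStar :
    ∀ x : ℝ, x < -1 ∨ 0 < x →
      Tendsto (fun n : ℕ => (zeta ((Real.sqrt 2 + 1) * Real.exp (Real.sqrt 2)))^[n] x)
        atTop (nhds (Real.sqrt 2)) := by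
  intro x hx
  show Tendsto (fun n : ℕ => ff^[n] x) atTop (nhds (Real.sqrt 2))
  rcases hx with h | h
  · have hy : 0 < ff x := ff_pos' h
    have hcv := conv_pos hy
    rw [← tendsto_add_atTop_iff_nat 1]
    have : (fun n => ff^[n+1] x) = fun n => ff^[n] (ff x) := by
      funext n
      exact Function.iterate_succ_apply ff n x
    rw [this]
    exact hcv
  · exact conv_pos h
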